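/- Let μ be a probability measure on real fields on the d-dimensional discrete torus that is invariant under point reflection x ↦ (u ↦ x(−u)). Let ψ, ψ', γ be complex kernels each satisfying the Hermitian symmetry κ(−u) = conj(κ(u)) for all u. Then, assuming integrability, the fourth-order scattering spectrum coefficient at the origin is real: Im E_μ[ ((|x⋆ψ|)⋆γ)(0) · conj( ((|x⋆ψ'|)⋆γ)(0) ) ] = 0, where |x⋆ψ| denotes the field u ↦ |(x⋆ψ)(u)|. -/

import Mathlib

open MeasureTheory Complex

/-- Convolution of a real field on the `d`-dimensional discrete torus with a complex
kernel: `(x⋆ψ)(u) = Σ_{u'} x(u')·ψ(u − u')`. -/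
noncomputable def conv (d L : ℕ) [NeZero L] (x : (Fin d → ZMod L) → ℝ)
    (ψ : (Fin d → ZMod L) → ℂ) (u : Fin d → ZMod L) : ℂ :=
  ∑ u' : Fin d → ZMod L, (x u' : ℂ) * ψ (u - u')

lemma conv_reflect (d L : ℕ) [NeZero L] (x : (Fin d → ZMod L) → ℝ)
    (ψ : (Fin d → ZMod L) → ℂ) (hψ : ∀ u, ψ (-u) = (starRingEnd ℂ) (ψ u))
    (v : Fin d → ZMod L) :
    conv d L (fun u => x (-u)) ψ v = (starRingEnd ℂ) (conv d L x ψ (-v)) := by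
  unfold conv
  rw [map_sum]
  refine Fintype.sum_equiv (Equiv.neg _) _ _ (fun w => ?_)
  simp only [Equiv.neg_apply, neg_neg, map_mul, Complex.conj_ofReal]
  congr 1
  rw [← hψ]
  ring_nf
lemma abs_conv_reflect (d L : ℕ) [NeZero L] (x : (Fin d → ZMod L) → ℝ)
    (ψ γ : (Fin d → ZMod L) → ℂ) (hψ : ∀ u, ψ (-u) = (starRingEnd ℂ) (ψ u))
    (hγ : ∀ u, γ (-u) = (starRingEnd ℂ) (γ u)) :
    conv d L (fun v => ‖conv d L (fun u => x (-u)) ψ v‖) γ 0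
      = (starRingEnd ℂ) (conv d L (fun v => ‖conv d L x ψ v‖) γ 0) := by
  have h1 : (fun v => ‖conv d L (fun u => x (-u)) ψ v‖)
      = fun v => ‖conv d L x ψ (-v)‖ := by
    funext v; rw [conv_reflect d L x ψ hψ, Complex.norm_conj]
  rw [h1]
  unfold conv
  rw [map_sum]
  refine Fintype.sum_equiv (Equiv.neg _) _ _ (fun w => ?_)
  simp only [Equiv.neg_apply, map_mul, Complex.conj_ofReal, zero_sub, neg_neg, ← hγ]

/-- If the distribution of a field is invariant under point reflection and the kernels
are Hermitian symmetric, the fourth-order scattering spectrum coefficient at the origin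
is real. -/
theorem stmt_11 (d L : ℕ) [NeZero L] (hL : 1 ≤ L)
    (μ : Measure ((Fin d → ZMod L) → ℝ)) [IsProbabilityMeasure μ]
    (hrefl : μ.map (fun x : (Fin d → ZMod L) → ℝ => fun u => x (-u)) = μ)
    (ψ ψ' γ : (Fin d → ZMod L) → ℂ)
    (hψ : ∀ u, ψ (-u) = (starRingEnd ℂ) (ψ u))
    (hψ' : ∀ u, ψ' (-u) = (starRingEnd ℂ) (ψ' u))
    (hγ : ∀ u, γ (-u) = (starRingEnd ℂ) (γ u))
    (hint : Integrable
      (fun x => conv d L (fun v => ‖conv d L x ψ v‖) γ 0 *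
        (starRingEnd ℂ) (conv d L (fun v => ‖conv d L x ψ' v‖) γ 0)) μ) :
    (∫ x, conv d L (fun v => ‖conv d L x ψ v‖) γ 0 *
        (starRingEnd ℂ) (conv d L (fun v => ‖conv d L x ψ' v‖) γ 0) ∂μ).im
      = 0 := by
  set f : ((Fin d → ZMod L) → ℝ) → ℂ := fun x =>
    conv d L (fun v => ‖conv d L x ψ v‖) γ 0 *
      (starRingEnd ℂ) (conv d L (fun v => ‖conv d L x ψ' v‖) γ 0) with hf
  have hR : Measurable (fun x : (Fin d → ZMod L) → ℝ => fun u => x (-u)) :=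
    measurable_pi_lambda _ (fun u => measurable_pi_apply _)
  have hcomp : ∀ x, f (fun u => x (-u)) = (starRingEnd ℂ) (f x) := by
    intro x
    simp only [hf, abs_conv_reflect d L x ψ γ hψ hγ, abs_conv_reflect d L x ψ' γ hψ' hγ,
      map_mul, RingHom.id_apply, Complex.conj_conj]
  have key : ∫ x, f x ∂μ = (starRingEnd ℂ) (∫ x, f x ∂μ) := by
    conv_lhs => rw [← hrefl]
    have h2 : AEStronglyMeasurable f
        (μ.map (fun x : (Fin d → ZMod L) → ℝ => fun u => x (-u))) := by
      rw [hrefl]; exact hint.1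
    rw [integral_map hR.aemeasurable h2]
    simp only [hcomp]
    exact integral_conj
  have := congrArg Complex.im key
  simp only [Complex.conj_im] at this
  linarith
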